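/- Let χ : ℝ → ℝ be twice continuously differentiable, supported in [−1,1], with χ = 1 on [−1/2,1/2] and 0 ≤ χ ≤ 1. Then there exists a constant C > 0, depending only on χ, such that for every A > 0, every s ≥ 0 and t ∈ ℝ with s + |t| ≥ 1, and every twice continuously differentiable c : ℝ → ℂ satisfying |c(λ)| ≤ A·e^{λs}, |c′(λ)| ≤ A·e^{λs}, |c″(λ)| ≤ A·e^{λs} for all λ ≥ 0, one has |∫₀^∞ e^{−λ(s+it)}·χ(λ)·c(λ) dλ − c(0)/(s+it)| ≤ C·A·(s+|t|)^{−2}. -/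

import Mathlib

open MeasureTheory

set_option maxHeartbeats 1000000

lemma exp_hasDerivAt_aux11 (z : ℂ) (x : ℝ) :
    HasDerivAt (fun l : ℝ => Complex.exp (-(l:ℂ) * z)) (-z * Complex.exp (-(x:ℂ) * z)) x := by
  have h1 : HasDerivAt (fun w : ℂ => -w * z) (-z) (x:ℂ) := by
    simpa using ((hasDerivAt_id (x:ℂ)).neg.mul_const z)
  have h : HasDerivAt (fun w : ℂ => Complex.exp (-w * z)) (-z * Complex.exp (-(x:ℂ)*z)) (x:ℂ) := by
    simpa [mul_comm] using h1.cexp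
  exact h.comp_ofReal

/-- Integration by parts step: if `u 1 = 0` then
`∫₀¹ u(l) e^{-lz} dl = u(0)/z + (∫₀¹ u'(l) e^{-lz} dl)/z`. -/
lemma ibp_step_aux11 (z : ℂ) (hz : z ≠ 0) (u u' : ℝ → ℂ)
    (hu : ∀ x, HasDerivAt u (u' x) x) (hu' : Continuous u') (hu1 : u 1 = 0) :
    ∫ l in (0:ℝ)..1, u l * Complex.exp (-(l:ℂ) * z)
      = u 0 / z + (∫ l in (0:ℝ)..1, u' l * Complex.exp (-(l:ℂ) * z)) / z := by
  have hv : ∀ x ∈ Set.uIcc (0:ℝ) 1,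
      HasDerivAt (fun l : ℝ => Complex.exp (-(l:ℂ) * z) / (-z)) (Complex.exp (-(x:ℂ) * z)) x := by
    intro x _
    have h := (exp_hasDerivAt_aux11 z x).div_const (-z)
    have hne : -z ≠ 0 := neg_ne_zero.mpr hz
    rw [show -z * Complex.exp (-(x:ℂ) * z) / (-z) = Complex.exp (-(x:ℂ) * z) by
      field_simp] at h
    exact h
  have hexp : Continuous fun l : ℝ => Complex.exp (-(l:ℂ) * z) := by
    fun_prop
  rw [intervalIntegral.integral_mul_deriv_eq_deriv_mul (fun x _ => hu x) hv
    (hu'.intervalIntegrable 0 1) (hexp.intervalIntegrable 0 1), hu1]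
  have hdiv : ∫ x in (0:ℝ)..1, u' x * (Complex.exp (-(x:ℂ) * z) / (-z))
      = (∫ x in (0:ℝ)..1, u' x * Complex.exp (-(x:ℂ) * z)) / (-z) := by
    simp_rw [← mul_div_assoc]
    exact intervalIntegral.integral_div (-z) _
  rw [hdiv]
  have hne : -z ≠ 0 := neg_ne_zero.mpr hz
  field_simp
  simp

/-- Leading-term extraction for the damped integral (using `χ(0) = 1`):
`∫₀^∞ e^{-λ(s+it)} χ(λ) c(λ) dλ = c(0)/(s+it) + O(A (s+|t|)⁻²)` for `s + |t| ≥ 1`. -/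
theorem stmt11 (χ : ℝ → ℝ) (hχ : ContDiff ℝ 2 χ)
    (hχsupp : Function.support χ ⊆ Set.Icc (-1) 1)
    (hχone : ∀ x ∈ Set.Icc (-(1:ℝ)/2) (1/2), χ x = 1)
    (hχbd : ∀ x : ℝ, 0 ≤ χ x ∧ χ x ≤ 1) :
    ∃ C > 0, ∀ A > 0, ∀ s : ℝ, 0 ≤ s → ∀ t : ℝ, 1 ≤ s + |t| →
      ∀ c : ℝ → ℂ, ContDiff ℝ 2 c →
      (∀ l : ℝ, 0 ≤ l → ‖c l‖ ≤ A * Real.exp (l * s)) →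
      (∀ l : ℝ, 0 ≤ l → ‖deriv c l‖ ≤ A * Real.exp (l * s)) →
      (∀ l : ℝ, 0 ≤ l → ‖deriv (deriv c) l‖ ≤ A * Real.exp (l * s)) →
      ‖(∫ l in Set.Ioi (0:ℝ),
            Complex.exp (-(l : ℂ) * ((s : ℂ) + Complex.I * (t : ℂ))) * (χ l : ℂ) * c l)
          - c 0 / ((s : ℂ) + Complex.I * (t : ℂ))‖
        ≤ C * A / (s + |t|) ^ 2 := by
  classical
  -- `deriv χ` is C¹
  have hχ' : ContDiff ℝ 1 (deriv χ) := by
    have h2 : (2 : WithTop ℕ∞) = 1 + 1 := by norm_num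
    rw [h2, contDiff_succ_iff_deriv] at hχ
    exact hχ.2.2
  have hχdiff : ∀ x, HasDerivAt χ (deriv χ x) x := fun x =>
    ((hχ.differentiable (by norm_num)) x).hasDerivAt
  have hχddiff : ∀ x, HasDerivAt (deriv χ) (deriv (deriv χ) x) x := fun x =>
    ((hχ'.differentiable (by norm_num)) x).hasDerivAt
  have hχdc : Continuous (deriv χ) := hχ.continuous_deriv (by norm_num)
  have hχddc : Continuous (deriv (deriv χ)) := hχ'.continuous_deriv le_rfl
  -- bounds for derivatives of χ on [0,1]
  obtain ⟨M₁, hM₁⟩ := isCompact_Icc.exists_bound_of_continuousOn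
    (hχdc.continuousOn (s := Set.Icc (0:ℝ) 1))
  obtain ⟨M₂, hM₂⟩ := isCompact_Icc.exists_bound_of_continuousOn
    (hχddc.continuousOn (s := Set.Icc (0:ℝ) 1))
  set N₁ : ℝ := max M₁ 0 with hN₁def
  set N₂ : ℝ := max M₂ 0 with hN₂def
  have hN₁ : ∀ x ∈ Set.Icc (0:ℝ) 1, |deriv χ x| ≤ N₁ := fun x hx =>
    le_trans (hM₁ x hx) (le_max_left _ _)
  have hN₂ : ∀ x ∈ Set.Icc (0:ℝ) 1, |deriv (deriv χ) x| ≤ N₂ := fun x hx =>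
    le_trans (hM₂ x hx) (le_max_left _ _)
  have hN₁0 : 0 ≤ N₁ := le_max_right _ _
  have hN₂0 : 0 ≤ N₂ := le_max_right _ _
  -- facts about χ
  have hχ0 : χ 0 = 1 := hχone 0 (by norm_num)
  have hχev0 : χ =ᶠ[nhds (0:ℝ)] fun _ => 1 := by
    filter_upwards [Ioo_mem_nhds (show (-(1:ℝ)/2) < 0 by norm_num)
      (show (0:ℝ) < 1/2 by norm_num)] with x hx
    exact hχone x ⟨le_of_lt hx.1, le_of_lt hx.2⟩
  have hχd0 : deriv χ 0 = 0 := by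
    rw [hχev0.deriv_eq]; simp
  have hzero : ∀ x : ℝ, 1 < x → χ x = 0 := by
    intro x hx
    by_contra h
    exact absurd (hχsupp h).2 (not_le.mpr hx)
  have hχ1 : χ 1 = 0 := by
    have h1 : Filter.Tendsto χ (nhdsWithin 1 (Set.Ioi 1)) (nhds (χ 1)) :=
      (hχ.continuous.tendsto 1).mono_left nhdsWithin_le_nhds
    have h2 : Filter.Tendsto χ (nhdsWithin 1 (Set.Ioi 1)) (nhds 0) := by
      apply Filter.Tendsto.congr' _ tendsto_const_nhds
      filter_upwards [self_mem_nhdsWithin] with x hx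
      exact (hzero x hx).symm
    exact tendsto_nhds_unique h1 h2
  have hdzero : ∀ x : ℝ, 1 < x → deriv χ x = 0 := by
    intro x hx
    have hev : χ =ᶠ[nhds x] fun _ => 0 := by
      filter_upwards [Ioi_mem_nhds hx] with y hy
      exact hzero y hy
    rw [hev.deriv_eq]; simp
  have hχd1 : deriv χ 1 = 0 := by
    have h1 : Filter.Tendsto (deriv χ) (nhdsWithin 1 (Set.Ioi 1)) (nhds (deriv χ 1)) :=
      (hχdc.tendsto 1).mono_left nhdsWithin_le_nhds
    have h2 : Filter.Tendsto (deriv χ) (nhdsWithin 1 (Set.Ioi 1)) (nhds 0) := by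
      apply Filter.Tendsto.congr' _ tendsto_const_nhds
      filter_upwards [self_mem_nhdsWithin] with x hx
      exact (hdzero x hx).symm
    exact tendsto_nhds_unique h1 h2
  refine ⟨2 * (2 + 2 * N₁ + N₂), by positivity, ?_⟩
  intro A hA s hs t hst c hc hc0 hc1 hc2
  set z : ℂ := (s : ℂ) + Complex.I * (t : ℂ) with hzdef
  have hzre : z.re = s := by simp [hzdef]
  have hzim : z.im = t := by simp [hzdef]
  have hz : z ≠ 0 := by
    intro h
    have hs0 : s = 0 := by rw [← hzre, h]; simp
    have ht0 : t = 0 := by rw [← hzim, h]; simp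
    rw [hs0, ht0] at hst; norm_num at hst
  -- `deriv c` is C¹
  have hc' : ContDiff ℝ 1 (deriv c) := by
    have h2 : (2 : WithTop ℕ∞) = 1 + 1 := by norm_num
    rw [h2, contDiff_succ_iff_deriv] at hc
    exact hc.2.2
  have hcdiff : ∀ x, HasDerivAt c (deriv c x) x := fun x =>
    ((hc.differentiable (by norm_num)) x).hasDerivAt
  have hcddiff : ∀ x, HasDerivAt (deriv c) (deriv (deriv c) x) x := fun x =>
    ((hc'.differentiable (by norm_num)) x).hasDerivAt
  have hcdc : Continuous (deriv c) := hc.continuous_deriv (by norm_num)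
  have hcddc : Continuous (deriv (deriv c)) := hc'.continuous_deriv le_rfl
  -- the functions f, f1, f2
  set f : ℝ → ℂ := fun l => (χ l : ℂ) * c l with hfdef
  set f1 : ℝ → ℂ := fun l => ((deriv χ l : ℝ) : ℂ) * c l + (χ l : ℂ) * deriv c l with hf1def
  set f2 : ℝ → ℂ := fun l =>
    (((deriv (deriv χ) l : ℝ) : ℂ) * c l + ((deriv χ l : ℝ) : ℂ) * deriv c l) +
      (((deriv χ l : ℝ) : ℂ) * deriv c l + (χ l : ℂ) * deriv (deriv c) l) with hf2def
  have hfderiv : ∀ x, HasDerivAt f (f1 x) x := by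
    intro x
    rw [hfdef, hf1def]
    exact (hχdiff x).ofReal_comp.mul (hcdiff x)
  have hf1deriv : ∀ x, HasDerivAt f1 (f2 x) x := by
    intro x
    rw [hf1def, hf2def]
    exact ((hχddiff x).ofReal_comp.mul (hcdiff x)).add ((hχdiff x).ofReal_comp.mul (hcddiff x))
  have hf1cont : Continuous f1 := by
    apply Continuous.add
    · exact (Complex.continuous_ofReal.comp hχdc).mul (hc.continuous)
    · exact (Complex.continuous_ofReal.comp hχ.continuous).mul hcdc
  have hf2cont : Continuous f2 := by
    apply Continuous.add
    · exact ((Complex.continuous_ofReal.comp hχddc).mul hc.continuous).add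
        ((Complex.continuous_ofReal.comp hχdc).mul hcdc)
    · exact ((Complex.continuous_ofReal.comp hχdc).mul hcdc).add
        ((Complex.continuous_ofReal.comp hχ.continuous).mul hcddc)
  -- convert the integral over Ioi 0 to an interval integral over [0,1]
  set g : ℝ → ℂ := fun l => Complex.exp (-(l : ℂ) * z) * (χ l : ℂ) * c l with hgdef
  have hexpc : Continuous fun l : ℝ => Complex.exp (-(l:ℂ) * z) := by fun_prop
  have hgcont : Continuous g := by
    rw [hgdef]
    exact (hexpc.mul (Complex.continuous_ofReal.comp hχ.continuous)).mul hc.continuous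
  have hgzero : ∀ x ∈ Set.Ioi (1:ℝ), g x = 0 := by
    intro x hx
    simp [hgdef, hzero x hx]
  have hioi : (∫ l in Set.Ioi (0:ℝ), g l) = ∫ l in (0:ℝ)..1, f l * Complex.exp (-(l:ℂ) * z) := by
    have hsplit : Set.Ioc (0:ℝ) 1 ∪ Set.Ioi 1 = Set.Ioi 0 := Set.Ioc_union_Ioi_eq_Ioi zero_le_one
    have hint2 : IntegrableOn g (Set.Ioi (1:ℝ)) := by
      apply (integrableOn_congr_fun (fun x hx => (hgzero x hx)) measurableSet_Ioi).mpr
      exact integrableOn_zero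
    rw [← hsplit, setIntegral_union (Set.Ioc_disjoint_Ioi le_rfl) measurableSet_Ioi
      hgcont.integrableOn_Ioc hint2,
      setIntegral_eq_zero_of_forall_eq_zero hgzero, add_zero,
      ← intervalIntegral.integral_of_le zero_le_one]
    apply intervalIntegral.integral_congr
    intro x _
    simp only [hgdef, hfdef]
    ring
  have e1 := ibp_step_aux11 z hz f f1 hfderiv hf1cont (by simp [hfdef, hχ1])
  have e2 := ibp_step_aux11 z hz f1 f2 hf1deriv hf2cont (by simp [hf1def, hχ1, hχd1])
  set J : ℂ := ∫ l in (0:ℝ)..1, f2 l * Complex.exp (-(l:ℂ) * z) with hJdef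
  have hf0 : f 0 = c 0 := by simp [hfdef, hχ0]
  have hf10 : f1 0 = deriv c 0 := by simp [hf1def, hχ0, hχd0]
  -- the key identity
  have hkey : (∫ l in Set.Ioi (0:ℝ), g l) - c 0 / z = deriv c 0 / z ^ 2 + J / z ^ 2 := by
    rw [hioi, e1, e2, hf0, hf10]
    field_simp
    ring
  rw [hkey]
  -- norm bounds
  have hd0 : ‖deriv c 0‖ ≤ A := by
    have := hc1 0 le_rfl
    simpa using this
  have hJbd : ‖J‖ ≤ (N₂ + 2 * N₁ + 1) * A := by
    have hbd : ∀ x ∈ Set.uIoc (0:ℝ) 1, ‖f2 x * Complex.exp (-(x:ℂ) * z)‖ ≤ (N₂ + 2 * N₁ + 1) * A := by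
      intro x hx
      rw [Set.uIoc_of_le zero_le_one] at hx
      have hx01 : x ∈ Set.Icc (0:ℝ) 1 := ⟨le_of_lt hx.1, hx.2⟩
      have hx0 : (0:ℝ) ≤ x := hx01.1
      have hexp : ‖Complex.exp (-(x:ℂ) * z)‖ = Real.exp (-(x * s)) := by
        rw [Complex.norm_exp]
        congr 1
        simp [hzdef]
      have hces : ‖c x‖ ≤ A * Real.exp (x * s) := hc0 x hx0
      have hc1s : ‖deriv c x‖ ≤ A * Real.exp (x * s) := hc1 x hx0
      have hc2s : ‖deriv (deriv c) x‖ ≤ A * Real.exp (x * s) := hc2 x hx0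
      have hχx : ‖(χ x : ℂ)‖ ≤ 1 := by
        rw [Complex.norm_real, Real.norm_eq_abs, abs_of_nonneg (hχbd x).1]
        exact (hχbd x).2
      have hχdx : ‖((deriv χ x : ℝ) : ℂ)‖ ≤ N₁ := by
        rw [Complex.norm_real, Real.norm_eq_abs]; exact hN₁ x hx01
      have hχddx : ‖((deriv (deriv χ) x : ℝ) : ℂ)‖ ≤ N₂ := by
        rw [Complex.norm_real, Real.norm_eq_abs]; exact hN₂ x hx01
      have b1 : ‖((deriv (deriv χ) x : ℝ) : ℂ) * c x‖ ≤ N₂ * (A * Real.exp (x * s)) := by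
        rw [norm_mul]
        exact mul_le_mul hχddx hces (norm_nonneg _) hN₂0
      have b2 : ‖((deriv χ x : ℝ) : ℂ) * deriv c x‖ ≤ N₁ * (A * Real.exp (x * s)) := by
        rw [norm_mul]
        exact mul_le_mul hχdx hc1s (norm_nonneg _) hN₁0
      have b3 : ‖(χ x : ℂ) * deriv (deriv c) x‖ ≤ 1 * (A * Real.exp (x * s)) := by
        rw [norm_mul]
        exact mul_le_mul hχx hc2s (norm_nonneg _) zero_le_one
      have hf2bd : ‖f2 x‖ ≤ (N₂ + 2 * N₁ + 1) * (A * Real.exp (x * s)) := by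
        rw [hf2def]
        refine le_trans (norm_add_le _ _) ?_
        refine le_trans (add_le_add (norm_add_le _ _) (norm_add_le _ _)) ?_
        have := add_le_add (add_le_add b1 b2) (add_le_add b2 b3)
        linarith
      calc ‖f2 x * Complex.exp (-(x:ℂ) * z)‖
          = ‖f2 x‖ * Real.exp (-(x * s)) := by rw [norm_mul, hexp]
        _ ≤ ((N₂ + 2 * N₁ + 1) * (A * Real.exp (x * s))) * Real.exp (-(x * s)) := by
            gcongr
        _ = (N₂ + 2 * N₁ + 1) * A * (Real.exp (x * s) * Real.exp (-(x * s))) := by ring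
        _ = (N₂ + 2 * N₁ + 1) * A := by
            rw [← Real.exp_add]; simp
    have h := intervalIntegral.norm_integral_le_of_norm_le_const hbd
    rw [hJdef]
    simpa using h
  have hnormz : ‖z‖ ^ 2 = s ^ 2 + t ^ 2 := by
    rw [Complex.sq_norm, Complex.normSq_apply, hzre, hzim]
    ring
  have hone : 1 ≤ (s + |t|) ^ 2 := by nlinarith [hst]
  have hsum : (s + |t|) ^ 2 ≤ 2 * (s ^ 2 + t ^ 2) := by
    nlinarith [sq_nonneg (s - |t|), sq_abs t]
  have hzpos : 0 < s ^ 2 + t ^ 2 := by nlinarith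
  have hsumpos : 0 < (s + |t|) ^ 2 := by nlinarith
  calc ‖deriv c 0 / z ^ 2 + J / z ^ 2‖
      ≤ ‖deriv c 0 / z ^ 2‖ + ‖J / z ^ 2‖ := norm_add_le _ _
    _ = (‖deriv c 0‖ + ‖J‖) / (s ^ 2 + t ^ 2) := by
        rw [norm_div, norm_div, norm_pow, hnormz, ← add_div]
    _ ≤ (A + (N₂ + 2 * N₁ + 1) * A) / (s ^ 2 + t ^ 2) := by
        gcongr
    _ = (2 + 2 * N₁ + N₂) * A / (s ^ 2 + t ^ 2) := by ring
    _ ≤ 2 * (2 + 2 * N₁ + N₂) * A / (s + |t|) ^ 2 := by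
        rw [div_le_div_iff₀ hzpos hsumpos]
        have hnn : 0 ≤ (2 + 2 * N₁ + N₂) * A := by positivity
        nlinarith
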